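/- The standard and presolved formulations for units with common efficiencies have the same projection onto total powers and state of charge: the set of tuples (P^gen, P^pump, s) with P^gen, P^pump : {1,…,T} → ℝ and s : {0,…,T} → ℝ for which there exists a standard-feasible point (with unit-dependent bounds and common efficiencies α, β) such that P^gen_t = ∑_{g=1}^n p^gen_{g,t} and P^pump_t = ∑_{g=1}^n p^pump_{g,t} for all t, is equal to the set of tuples (P^gen, P^pump, s) for which there exist X^pump, z^pump, X^gen, z^gen, w^gen, w^pump making (P^gen, P^pump, X^pump, z^pump, X^gen, z^gen, s, w^gen, w^pump) presolved-feasible. -/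

import Mathlib

lemma split_sum {n : ℕ} (S : Finset (Fin n)) (a b : Fin n → ℝ)
    (hab : ∀ g ∈ S, a g ≤ b g) (x : ℝ)
    (hx : ∑ g ∈ S, a g ≤ x) (hx' : x ≤ ∑ g ∈ S, b g) :
    ∃ p : Fin n → ℝ, (∀ g ∈ S, a g ≤ p g ∧ p g ≤ b g) ∧
      (∀ g, g ∉ S → p g = 0) ∧ ∑ g ∈ S, p g = x := by
  by_cases hD : ∑ g ∈ S, (b g - a g) = 0
  · have hab' : ∑ g ∈ S, b g = ∑ g ∈ S, a g := by
      rw [Finset.sum_sub_distrib] at hD; linarith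
    have hxa : x = ∑ g ∈ S, a g := le_antisymm (hab' ▸ hx') hx
    refine ⟨fun g => if g ∈ S then a g else 0, fun g hg => ?_, fun g hg => by simp [hg], ?_⟩
    · simp only [if_pos hg]; exact ⟨le_refl _, hab g hg⟩
    · rw [hxa]; exact Finset.sum_congr rfl fun g hg => by simp [hg]
  · have hDpos : 0 < ∑ g ∈ S, (b g - a g) :=
      lt_of_le_of_ne (Finset.sum_nonneg fun g hg => sub_nonneg.2 (hab g hg)) (Ne.symm hD)
    set D := ∑ g ∈ S, (b g - a g) with hDdef
    set lam := (x - ∑ g ∈ S, a g) / D with hlam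
    have hlam0 : 0 ≤ lam := div_nonneg (by linarith) hDpos.le
    have hlam1 : lam ≤ 1 := by
      rw [hlam, div_le_one hDpos]
      rw [hDdef, Finset.sum_sub_distrib]; linarith
    refine ⟨fun g => if g ∈ S then a g + lam * (b g - a g) else 0, fun g hg => ?_,
      fun g hg => by simp [hg], ?_⟩
    · simp only [if_pos hg]
      constructor
      · nlinarith [hab g hg]
      · nlinarith [hab g hg]
    · have : ∑ g ∈ S, (if g ∈ S then a g + lam * (b g - a g) else 0)
          = ∑ g ∈ S, (a g + lam * (b g - a g)) :=
        Finset.sum_congr rfl fun g hg => by simp [hg]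
      rw [this, Finset.sum_add_distrib, ← Finset.mul_sum, ← hDdef, hlam]
      field_simp
      ring

lemma side_exists {n k : ℕ} (a b : Fin n → ℝ) (l u : Fin k → ℝ)
    (hUnion : (⋃ i, Set.Icc (l i) (u i)) =
      ⋃ S ∈ {S : Finset (Fin n) | S.Nonempty},
        Set.Icc (∑ g ∈ S, a g) (∑ g ∈ S, b g))
    (uu pp : Fin n → ℝ)
    (h01 : ∀ g, uu g = 0 ∨ uu g = 1)
    (hlb : ∀ g, a g * uu g ≤ pp g) (hub : ∀ g, pp g ≤ b g * uu g) :
    ∃ (X z : Fin k → ℝ) (w : ℝ),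
      (w = 1 ↔ ∃ g, uu g = 1) ∧ (w = 0 ∨ w = 1) ∧
      (∑ g, pp g) = ∑ i, X i ∧
      (∀ i, (z i = 0 ∨ z i = 1) ∧ l i * z i ≤ X i ∧ X i ≤ u i * z i) ∧
      (∑ i, z i) = w := by
  by_cases hact : ∃ g, uu g = 1
  · set S := Finset.univ.filter (fun g => uu g = 1) with hSdef
    have hSne : S.Nonempty := ⟨hact.choose, by simp [hSdef, hact.choose_spec]⟩
    have hmemS : ∀ g ∈ S, uu g = 1 := fun g hg => by simpa [hSdef] using hg
    have hzero : ∀ g ∉ S, pp g = 0 := by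
      intro g hg
      have h0 : uu g = 0 := by
        rcases h01 g with h | h
        · exact h
        · exact absurd (by simp [hSdef, h]) hg
      have h1 := hlb g; have h2 := hub g
      rw [h0] at h1 h2; simp at h1 h2; linarith
    have hsum : ∑ g, pp g = ∑ g ∈ S, pp g :=
      (Finset.sum_subset (Finset.subset_univ S) (fun g _ hg => hzero g hg)).symm
    have hlo : ∑ g ∈ S, a g ≤ ∑ g ∈ S, pp g :=
      Finset.sum_le_sum fun g hg => by have := hlb g; rw [hmemS g hg] at this; simpa using this
    have hhi : ∑ g ∈ S, pp g ≤ ∑ g ∈ S, b g :=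
      Finset.sum_le_sum fun g hg => by have := hub g; rw [hmemS g hg] at this; simpa using this
    have hmem : (∑ g, pp g) ∈ ⋃ i, Set.Icc (l i) (u i) := by
      rw [hUnion]
      exact Set.mem_iUnion₂.2 ⟨S, hSne, by rw [hsum]; exact ⟨hlo, hhi⟩⟩
    obtain ⟨i, hi⟩ := Set.mem_iUnion.1 hmem
    refine ⟨fun j => if j = i then ∑ g, pp g else 0,
            fun j => if j = i then 1 else 0, 1,
            ⟨fun _ => hact, fun _ => rfl⟩, Or.inr rfl, ?_, ?_, ?_⟩
    · rw [Finset.sum_ite_eq' Finset.univ i (fun _ => ∑ g, pp g)]; simp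
    · intro j
      by_cases hj : j = i
      · subst hj; simp only [if_pos rfl]
        exact ⟨Or.inr rfl, by simpa using hi.1, by simpa using hi.2⟩
      · simp [hj]
    · rw [Finset.sum_ite_eq' Finset.univ i (fun _ => (1:ℝ))]; simp
  · refine ⟨0, 0, 0, ⟨fun h => absurd h (by norm_num), fun h => absurd h hact⟩,
      Or.inl rfl, ?_, fun i => by simp, by simp⟩
    · have : ∀ g, pp g = 0 := by
        intro g
        have h0 : uu g = 0 := (h01 g).resolve_right fun h => hact ⟨g, h⟩
        have h1 := hlb g; have h2 := hub g
        rw [h0] at h1 h2; simp at h1 h2; linarith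
      simp [this]

lemma side_recover {n k : ℕ} (a b : Fin n → ℝ)
    (hab : ∀ g, a g ≤ b g) (l u : Fin k → ℝ)
    (hUnion : (⋃ i, Set.Icc (l i) (u i)) =
      ⋃ S ∈ {S : Finset (Fin n) | S.Nonempty},
        Set.Icc (∑ g ∈ S, a g) (∑ g ∈ S, b g))
    (X z : Fin k → ℝ) (w : ℝ)
    (hw : w = 0 ∨ w = 1)
    (hz : ∀ i, (z i = 0 ∨ z i = 1) ∧ l i * z i ≤ X i ∧ X i ≤ u i * z i)
    (hzw : ∑ i, z i = w) :
    ∃ uu pp : Fin n → ℝ,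
      (∀ g, (uu g = 0 ∨ uu g = 1) ∧ uu g ≤ w ∧
        a g * uu g ≤ pp g ∧ pp g ≤ b g * uu g) ∧
      ∑ g, pp g = ∑ i, X i := by
  have hznn : ∀ i, (0:ℝ) ≤ z i := fun i => by rcases (hz i).1 with h | h <;> simp [h]
  rcases hw with hw | hw
  · have hz0 : ∀ i, z i = 0 := by
      intro i
      by_contra h
      have h1 : z i = 1 := (hz i).1.resolve_left h
      have : (1:ℝ) ≤ ∑ j, z j := by
        calc (1:ℝ) = z i := h1.symm
        _ ≤ ∑ j, z j := Finset.single_le_sum (fun j _ => hznn j) (Finset.mem_univ i)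
      rw [hzw, hw] at this; linarith
    have hX0 : ∀ i, X i = 0 := by
      intro i
      have h1 := (hz i).2.1; have h2 := (hz i).2.2
      rw [hz0 i] at h1 h2; simp at h1 h2; linarith
    exact ⟨0, 0, fun g => by simp [hw], by simp [hX0]⟩
  · subst hw
    obtain ⟨i, hi1⟩ : ∃ i, z i = 1 := by
      by_contra h
      push_neg at h
      have hall : ∀ i, z i = 0 := fun i => (hz i).1.resolve_right (h i)
      have h0 : ∑ j, z j = 0 := Finset.sum_eq_zero fun j _ => hall j
      rw [hzw] at h0; exact one_ne_zero h0
    have hzj : ∀ j, j ≠ i → z j = 0 := by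
      intro j hj
      by_contra h
      have h1 : z j = 1 := (hz j).1.resolve_left h
      have h2 : (1:ℝ) ≤ ∑ m ∈ Finset.univ.erase i, z m := by
        calc (1:ℝ) = z j := h1.symm
        _ ≤ _ := Finset.single_le_sum (fun m _ => hznn m)
              (Finset.mem_erase.2 ⟨hj, Finset.mem_univ j⟩)
      have h3 : ∑ m, z m = z i + ∑ m ∈ Finset.univ.erase i, z m :=
        (Finset.add_sum_erase Finset.univ z (Finset.mem_univ i)).symm
      rw [hzw, hi1] at h3; linarith
    have hXj : ∀ j, j ≠ i → X j = 0 := by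
      intro j hj
      have h1 := (hz j).2.1; have h2 := (hz j).2.2
      rw [hzj j hj] at h1 h2; simp at h1 h2; linarith
    have hXsum : ∑ j, X j = X i := by
      rw [← Finset.add_sum_erase Finset.univ X (Finset.mem_univ i)]
      have : ∑ m ∈ Finset.univ.erase i, X m = 0 :=
        Finset.sum_eq_zero fun m hm => hXj m (Finset.mem_erase.1 hm).1
      rw [this]; ring
    have hXi : X i ∈ Set.Icc (l i) (u i) := by
      have h1 := (hz i).2.1; have h2 := (hz i).2.2
      rw [hi1] at h1 h2; simp at h1 h2; exact ⟨h1, h2⟩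
    have hmem : X i ∈ ⋃ S ∈ {S : Finset (Fin n) | S.Nonempty},
        Set.Icc (∑ g ∈ S, a g) (∑ g ∈ S, b g) := by
      rw [← hUnion]; exact Set.mem_iUnion.2 ⟨i, hXi⟩
    obtain ⟨S, hSne, hXS⟩ := Set.mem_iUnion₂.1 hmem
    obtain ⟨p, hp1, hp2, hp3⟩ := split_sum S a b (fun g _ => hab g) (X i) hXS.1 hXS.2
    refine ⟨fun g => if g ∈ S then 1 else 0, p, fun g => ?_, ?_⟩
    · by_cases hg : g ∈ S
      · simp only [if_pos hg]
        exact ⟨Or.inr (by simp), le_refl 1, by simpa using (hp1 g hg).1,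
          by simpa using (hp1 g hg).2⟩
      · simp only [if_neg hg]
        exact ⟨Or.inl (by simp), zero_le_one, by simp [hp2 g hg], by simp [hp2 g hg]⟩
    · rw [hXsum, ← hp3]
      exact (Finset.sum_subset (Finset.subset_univ S) (fun g _ hg => hp2 g hg)).symm



/-- A standard-feasible point for `n` PSH units with unit-dependent bounds and
common efficiencies `α, β`: unit `g` has generation bounds
`agen g ≤ bgen g` and pumping bounds `apump g ≤ bpump g`; `ugen, upump, uoff`
are the binary unit status variables, `pgen, ppump` the unit power levels,
`s` the state of charge (indexed by `0, …, T`), and `wgen, wpump` the binary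
plant status variables. -/
def StandardFeasibleN (n T : ℕ) (agen bgen apump bpump : Fin n → ℝ)
    (α β Slo Shi S0 ST : ℝ)
    (ugen upump uoff pgen ppump : Fin n → ℕ → ℝ)
    (s wgen wpump : ℕ → ℝ) : Prop :=
  (∀ g : Fin n, ∀ t : ℕ, 1 ≤ t → t ≤ T →
    (ugen g t = 0 ∨ ugen g t = 1) ∧
    (upump g t = 0 ∨ upump g t = 1) ∧
    (uoff g t = 0 ∨ uoff g t = 1) ∧
    ugen g t + upump g t + uoff g t = 1 ∧
    agen g * ugen g t ≤ pgen g t ∧ pgen g t ≤ bgen g * ugen g t ∧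
    apump g * upump g t ≤ ppump g t ∧ ppump g t ≤ bpump g * upump g t ∧
    upump g t ≤ wpump t ∧ ugen g t ≤ wgen t) ∧
  (∀ t : ℕ, 1 ≤ t → t ≤ T →
    (wgen t = 0 ∨ wgen t = 1) ∧
    (wpump t = 0 ∨ wpump t = 1) ∧
    wpump t + wgen t ≤ 1 ∧
    s t = s (t - 1) + α * (∑ g : Fin n, ppump g t)
        - β * (∑ g : Fin n, pgen g t) ∧
    s (t - 1) + α * (∑ g : Fin n, ppump g t) ≤ Shi ∧
    Slo ≤ s (t - 1) - β * (∑ g : Fin n, pgen g t)) ∧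
  s 0 = S0 ∧ s T = ST

/-- A presolved-feasible point: the total pumping power `Ppump t` is split as
`∑ i, Xp t i` with interval-selection binaries `zp t i` summing to the plant
pumping status `wpump t`, where `[l i, u i]`, `i = 1, …, k`, are the disjoint
pumping intervals obtained by presolving, and similarly the total generation
power `Pgen t` uses the disjoint generation intervals `[l' i, u' i]`,
`i = 1, …, k'`; `s` is the state of charge (indexed by `0, …, T`). -/
def PresolvedFeasible (T k k' : ℕ) (l u : Fin k → ℝ) (l' u' : Fin k' → ℝ)
    (α β Slo Shi S0 ST : ℝ)
    (Pgen Ppump : ℕ → ℝ)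
    (Xp : ℕ → Fin k → ℝ) (zp : ℕ → Fin k → ℝ)
    (Xg : ℕ → Fin k' → ℝ) (zg : ℕ → Fin k' → ℝ)
    (s wgen wpump : ℕ → ℝ) : Prop :=
  (∀ t : ℕ, 1 ≤ t → t ≤ T →
    (wgen t = 0 ∨ wgen t = 1) ∧
    (wpump t = 0 ∨ wpump t = 1) ∧
    wpump t + wgen t ≤ 1 ∧
    Ppump t = ∑ i, Xp t i ∧
    (∀ i, (zp t i = 0 ∨ zp t i = 1) ∧
      l i * zp t i ≤ Xp t i ∧ Xp t i ≤ u i * zp t i) ∧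
    (∑ i, zp t i) = wpump t ∧
    Pgen t = ∑ i, Xg t i ∧
    (∀ i, (zg t i = 0 ∨ zg t i = 1) ∧
      l' i * zg t i ≤ Xg t i ∧ Xg t i ≤ u' i * zg t i) ∧
    (∑ i, zg t i) = wgen t ∧
    s t = s (t - 1) + α * Ppump t - β * Pgen t ∧
    s (t - 1) + α * Ppump t ≤ Shi ∧
    Slo ≤ s (t - 1) - β * Pgen t) ∧
  s 0 = S0 ∧ s T = ST

/-- The standard and presolved formulations for units with common efficiencies
have the same projection onto the total powers and state of charge
`(Pgen, Ppump, s)`:  here the `[l i, u i]` are pairwise disjoint closed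
intervals whose union is the union, over nonempty subsets `S` of the units, of
`[∑_{g∈S} apump g, ∑_{g∈S} bpump g]`, and similarly the `[l' i, u' i]` for the
generation bounds. -/
theorem standard_eq_presolved_projection (n T : ℕ) (hn : 1 ≤ n) (hT : 1 ≤ T)
    (agen bgen apump bpump : Fin n → ℝ)
    (hgen0 : ∀ g, 0 ≤ agen g) (hgen : ∀ g, agen g ≤ bgen g)
    (hpump0 : ∀ g, 0 ≤ apump g) (hpump : ∀ g, apump g ≤ bpump g)
    (α β Slo Shi S0 ST : ℝ) (hα : 0 ≤ α) (hβ : 0 ≤ β) (hS : Slo ≤ Shi)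
    (k k' : ℕ) (l u : Fin k → ℝ) (l' u' : Fin k' → ℝ)
    (hlu : ∀ i, l i ≤ u i) (hdisj : ∀ i j : Fin k, i < j → u i < l j)
    (hlu' : ∀ i, l' i ≤ u' i) (hdisj' : ∀ i j : Fin k', i < j → u' i < l' j)
    (hpumpUnion : (⋃ i, Set.Icc (l i) (u i)) =
      ⋃ S ∈ {S : Finset (Fin n) | S.Nonempty},
        Set.Icc (∑ g ∈ S, apump g) (∑ g ∈ S, bpump g))
    (hgenUnion : (⋃ i, Set.Icc (l' i) (u' i)) =
      ⋃ S ∈ {S : Finset (Fin n) | S.Nonempty},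
        Set.Icc (∑ g ∈ S, agen g) (∑ g ∈ S, bgen g)) :
    {x : (ℕ → ℝ) × (ℕ → ℝ) × (ℕ → ℝ) |
      ∃ ugen upump uoff pgen ppump : Fin n → ℕ → ℝ, ∃ wgen wpump : ℕ → ℝ,
        StandardFeasibleN n T agen bgen apump bpump α β Slo Shi S0 ST
          ugen upump uoff pgen ppump x.2.2 wgen wpump ∧
        ∀ t : ℕ, 1 ≤ t → t ≤ T →
          x.1 t = ∑ g : Fin n, pgen g t ∧ x.2.1 t = ∑ g : Fin n, ppump g t}
    = {x : (ℕ → ℝ) × (ℕ → ℝ) × (ℕ → ℝ) |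
      ∃ (Xp : ℕ → Fin k → ℝ) (zp : ℕ → Fin k → ℝ)
        (Xg : ℕ → Fin k' → ℝ) (zg : ℕ → Fin k' → ℝ) (wgen wpump : ℕ → ℝ),
        PresolvedFeasible T k k' l u l' u' α β Slo Shi S0 ST
          x.1 x.2.1 Xp zp Xg zg x.2.2 wgen wpump} := by
  ext x
  simp only [Set.mem_setOf_eq]
  constructor
  · rintro ⟨ug, up, uo, pg, pp, wg, wp, ⟨hunit, htime, hs0, hsT⟩, hx⟩
    have key : ∀ t, ∃ (Xp zp : Fin k → ℝ) (Xg zg : Fin k' → ℝ) (wG wP : ℝ),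
        1 ≤ t → t ≤ T →
        (wG = 0 ∨ wG = 1) ∧ (wP = 0 ∨ wP = 1) ∧ wP + wG ≤ 1 ∧
        x.2.1 t = ∑ i, Xp i ∧
        (∀ i, (zp i = 0 ∨ zp i = 1) ∧ l i * zp i ≤ Xp i ∧ Xp i ≤ u i * zp i) ∧
        (∑ i, zp i) = wP ∧
        x.1 t = ∑ i, Xg i ∧
        (∀ i, (zg i = 0 ∨ zg i = 1) ∧ l' i * zg i ≤ Xg i ∧ Xg i ≤ u' i * zg i) ∧
        (∑ i, zg i) = wG := by
      intro t
      by_cases ht : 1 ≤ t ∧ t ≤ T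
      · obtain ⟨ht1, ht2⟩ := ht
        obtain ⟨Xp, zp, wP, hwPiff, hwP01, hXpsum, hzp, hzpw⟩ :=
          side_exists apump bpump l u hpumpUnion (fun g => up g t) (fun g => pp g t)
            (fun g => (hunit g t ht1 ht2).2.1)
            (fun g => (hunit g t ht1 ht2).2.2.2.2.2.2.1)
            (fun g => (hunit g t ht1 ht2).2.2.2.2.2.2.2.1)
        obtain ⟨Xg, zg, wG, hwGiff, hwG01, hXgsum, hzg, hzgw⟩ :=
          side_exists agen bgen l' u' hgenUnion (fun g => ug g t) (fun g => pg g t)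
            (fun g => (hunit g t ht1 ht2).1)
            (fun g => (hunit g t ht1 ht2).2.2.2.2.1)
            (fun g => (hunit g t ht1 ht2).2.2.2.2.2.1)
        refine ⟨Xp, zp, Xg, zg, wG, wP, fun _ _ => ⟨hwG01, hwP01, ?_, ?_, hzp, hzpw, ?_, hzg, hzgw⟩⟩
        · rcases hwP01 with h | h
          · rcases hwG01 with h' | h' <;> rw [h, h'] <;> norm_num
          · rcases hwG01 with h' | h'
            · rw [h, h']; norm_num
            · exfalso
              obtain ⟨gp, hgp⟩ := hwPiff.1 h
              obtain ⟨gg, hgg⟩ := hwGiff.1 h'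
              have h1 := (hunit gp t ht1 ht2).2.2.2.2.2.2.2.2.1
              have h2 := (hunit gg t ht1 ht2).2.2.2.2.2.2.2.2.2
              have h3 := (htime t ht1 ht2).2.2.1
              rw [hgp] at h1; rw [hgg] at h2; linarith
        · rw [(hx t ht1 ht2).2]; exact hXpsum
        · rw [(hx t ht1 ht2).1]; exact hXgsum
      · exact ⟨0, 0, 0, 0, 0, 0, fun h1 h2 => absurd ⟨h1, h2⟩ ht⟩
    choose Xp zp Xg zg wG wP hkey using key
    refine ⟨Xp, zp, Xg, zg, wG, wP, ?_, hs0, hsT⟩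
    intro t ht1 ht2
    obtain ⟨hwG01, hwP01, hsum1, hXpsum, hzp, hzpw, hXgsum, hzg, hzgw⟩ := hkey t ht1 ht2
    have heq := (htime t ht1 ht2).2.2.2.1
    have hShi := (htime t ht1 ht2).2.2.2.2.1
    have hSlo := (htime t ht1 ht2).2.2.2.2.2
    have hxg := (hx t ht1 ht2).1
    have hxp := (hx t ht1 ht2).2
    rw [← hxg, ← hxp] at heq
    rw [← hxp] at hShi
    rw [← hxg] at hSlo
    exact ⟨hwG01, hwP01, hsum1, hXpsum, hzp, hzpw, hXgsum, hzg, hzgw, heq, hShi, hSlo⟩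
  · rintro ⟨Xp, zp, Xg, zg, wg, wp, htime, hs0, hsT⟩
    have key : ∀ t, ∃ (ug' up' pg' pp' : Fin n → ℝ),
        1 ≤ t → t ≤ T →
        (∀ g, (ug' g = 0 ∨ ug' g = 1) ∧ (up' g = 0 ∨ up' g = 1) ∧
          agen g * ug' g ≤ pg' g ∧ pg' g ≤ bgen g * ug' g ∧
          apump g * up' g ≤ pp' g ∧ pp' g ≤ bpump g * up' g ∧
          up' g ≤ wp t ∧ ug' g ≤ wg t) ∧
        ∑ g, pg' g = x.1 t ∧ ∑ g, pp' g = x.2.1 t := by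
      intro t
      by_cases ht : 1 ≤ t ∧ t ≤ T
      · obtain ⟨hwg01, hwp01, hw1, hPp, hzpc, hzpw, hPg, hzgc, hzgw, _, _, _⟩ :=
          htime t ht.1 ht.2
        obtain ⟨uup, ppv, huup, hppsum⟩ :=
          side_recover apump bpump hpump l u hpumpUnion (Xp t) (zp t) (wp t) hwp01 hzpc hzpw
        obtain ⟨uug, pgv, huug, hpgsum⟩ :=
          side_recover agen bgen hgen l' u' hgenUnion (Xg t) (zg t) (wg t) hwg01 hzgc hzgw
        exact ⟨uug, uup, pgv, ppv, fun _ _ =>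
          ⟨fun g => ⟨(huug g).1, (huup g).1, (huug g).2.2.1, (huug g).2.2.2,
            (huup g).2.2.1, (huup g).2.2.2, (huup g).2.1, (huug g).2.1⟩,
           hpgsum.trans hPg.symm, hppsum.trans hPp.symm⟩⟩
      · exact ⟨0, 0, 0, 0, fun h1 h2 => absurd ⟨h1, h2⟩ ht⟩
    choose ug up pg pp hkey using key
    refine ⟨fun g t => ug t g, fun g t => up t g, fun g t => 1 - ug t g - up t g,
      fun g t => pg t g, fun g t => pp t g, wg, wp, ⟨?_, ?_, hs0, hsT⟩, ?_⟩
    · intro g t ht1 ht2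
      obtain ⟨hg01, hp01, hglb, hgub, hplb, hpub, hpw, hgw⟩ := (hkey t ht1 ht2).1 g
      have h3 := (htime t ht1 ht2).2.2.1
      have hle : ug t g + up t g ≤ 1 := by
        rcases hg01 with h | h <;> rcases hp01 with h' | h' <;> rw [h, h'] <;> linarith
      refine ⟨hg01, hp01, ?_,
        by show ug t g + up t g + (1 - ug t g - up t g) = 1; ring,
        hglb, hgub, hplb, hpub, hpw, hgw⟩
      rcases hg01 with h | h <;> rcases hp01 with h' | h'
      · right; show (1:ℝ) - ug t g - up t g = 1; rw [h, h']; ring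
      · left; show (1:ℝ) - ug t g - up t g = 0; rw [h, h']; ring
      · left; show (1:ℝ) - ug t g - up t g = 0; rw [h, h']; ring
      · exfalso; rw [h, h'] at hle; linarith
    · intro t ht1 ht2
      obtain ⟨hwg01, hwp01, hw1, hPp, hzpc, hzpw, hPg, hzgc, hzgw, heq, hShi, hSlo⟩ :=
        htime t ht1 ht2
      have hsg : ∑ g : Fin n, pg t g = x.1 t := (hkey t ht1 ht2).2.1
      have hsp : ∑ g : Fin n, pp t g = x.2.1 t := (hkey t ht1 ht2).2.2
      refine ⟨hwg01, hwp01, hw1, ?_, ?_, ?_⟩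
      · show x.2.2 t = x.2.2 (t-1) + α * (∑ g : Fin n, pp t g) - β * (∑ g : Fin n, pg t g)
        rw [hsg, hsp]; exact heq
      · show x.2.2 (t-1) + α * (∑ g : Fin n, pp t g) ≤ Shi
        rw [hsp]; exact hShi
      · show Slo ≤ x.2.2 (t-1) - β * (∑ g : Fin n, pg t g)
        rw [hsg]; exact hSlo
    · intro t ht1 ht2
      exact ⟨((hkey t ht1 ht2).2.1).symm, ((hkey t ht1 ht2).2.2).symm⟩
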